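/- Let u ∈ X·O_K[[X]] be invertible with u'(0) ∈ 1 + pℤ_p (and u'(0) ≠ 1 when p is odd, or u'(0) ∈ 1+4ℤ_2 when p=2). Then the map m ↦ u^{∘m} from ℤ to X·O_K[[X]] extends uniquely to a continuous map ℤ_p → X·O_K[[X]] (coefficientwise p-adic convergence) such that u^{∘(m+m')} = u^{∘m} ∘ u^{∘m'} for all m, m' ∈ ℤ_p, and (u^{∘m})'(0) = u'(0)^m. -/

import Mathlib

open PowerSeries

noncomputable def PSComp {R : Type*} [CommRing R] (f g : PowerSeries R) : PowerSeries R :=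
  PowerSeries.mk fun n => ((f.trunc (n + 1)).comp (g.trunc (n + 1))).coeff n

noncomputable def PSIter {R : Type*} [CommRing R] (f : PowerSeries R) : ℕ → PowerSeries R
  | 0 => PowerSeries.X
  | n + 1 => PSComp f (PSIter f n)

open Finset Filter

set_option linter.unusedSectionVars false
set_option linter.unusedVariables false
set_option maxHeartbeats 1000000


section PSCompAlgebra

variable {R : Type*} [CommRing R]

lemma coeff_pow_eq_zero' {g : PowerSeries R} (hg : constantCoeff g = 0) {n j : ℕ}
    (h : n < j) : coeff n (g ^ j) = 0 := by
  have hx : (X : PowerSeries R) ∣ g := by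
    rw [show (X : PowerSeries R) = X ^ 1 by ring, X_pow_dvd_iff]
    intro m hm
    interval_cases m
    · simpa [coeff_zero_eq_constantCoeff] using hg
  exact X_pow_dvd_iff.mp (pow_dvd_pow_of_dvd hx j) n h

lemma coeff_pow_congr {g h : PowerSeries R} {n : ℕ}
    (hgh : ∀ i ≤ n, coeff i g = coeff i h) (j : ℕ) :
    coeff n (g ^ j) = coeff n (h ^ j) := by
  obtain ⟨c, hc⟩ := sub_dvd_pow_sub_pow g h j
  have h2 : coeff n ((g - h) * c) = 0 := by
    rw [coeff_mul]
    apply Finset.sum_eq_zero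
    rintro ⟨i, i'⟩ hmem
    have hi : i ≤ n := by
      have := Finset.HasAntidiagonal.mem_antidiagonal.mp hmem; omega
    simp [map_sub, hgh i hi]
  have h3 := congrArg (coeff n) hc
  rw [map_sub, h2] at h3
  exact sub_eq_zero.mp h3

lemma coeff_aeval_congr {g₁ g₂ : PowerSeries R} {n : ℕ}
    (h : ∀ i ≤ n, coeff i g₁ = coeff i g₂) (P : Polynomial R) :
    coeff n (Polynomial.aeval g₁ P) = coeff n (Polynomial.aeval g₂ P) := by
  induction P using Polynomial.induction_on' with
  | add p q hp hq => simp [map_add, hp, hq]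
  | monomial k a =>
      simp only [Polynomial.aeval_monomial, PowerSeries.algebraMap_apply,
        Algebra.algebraMap_self, RingHom.id_apply, coeff_C_mul]
      rw [coeff_pow_congr h k]

lemma coeff_pow_mul_eq_zero {g A : PowerSeries R} (hg : constantCoeff g = 0) {n : ℕ} :
    coeff n (g ^ (n + 1) * A) = 0 := by
  rw [coeff_mul]
  apply Finset.sum_eq_zero
  rintro ⟨i, i'⟩ hmem
  have hi : i ≤ n := by have := Finset.HasAntidiagonal.mem_antidiagonal.mp hmem; omega
  rw [coeff_pow_eq_zero' hg (by omega), zero_mul]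

lemma coeff_aeval_congr_poly {g : PowerSeries R} (hg : constantCoeff g = 0) {n : ℕ}
    {P Q : Polynomial R} (h : ∀ i ≤ n, P.coeff i = Q.coeff i) :
    coeff n (Polynomial.aeval g P) = coeff n (Polynomial.aeval g Q) := by
  obtain ⟨H, hH⟩ : Polynomial.X ^ (n + 1) ∣ P - Q :=
    Polynomial.X_pow_dvd_iff.mpr fun d hd => by
      simp [Polynomial.coeff_sub, h d (by omega)]
  have hPQ : P = Q + Polynomial.X ^ (n + 1) * H := by rw [← hH]; ring
  rw [hPQ, map_add, map_mul, map_pow, Polynomial.aeval_X, map_add,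
    coeff_pow_mul_eq_zero hg, add_zero]

lemma coe_comp_eq_aeval (P Q : Polynomial R) :
    ((P.comp Q : Polynomial R) : PowerSeries R)
      = Polynomial.aeval ((Q : Polynomial R) : PowerSeries R) P := by
  rw [Polynomial.comp, ← Polynomial.coeToPowerSeries.ringHom_apply,
    Polynomial.hom_eval₂, Polynomial.aeval_def]
  congr 1
  ext a
  simp [Polynomial.coe_C, PowerSeries.algebraMap_apply]

lemma coeff_PSComp_aeval {f g : PowerSeries R} (hg : constantCoeff g = 0) {n i : ℕ}
    (hi : i ≤ n) :
    coeff i (PSComp f g) = coeff i (Polynomial.aeval g (trunc (n + 1) f)) := by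
  have h1 : coeff i (PSComp f g)
      = coeff i (((trunc (i + 1) f).comp (trunc (i + 1) g) : PowerSeries R)) := by
    rw [PSComp, coeff_mk, Polynomial.coeff_coe]
  rw [h1, coe_comp_eq_aeval]
  have htr : constantCoeff ((trunc (i + 1) g : Polynomial R) : PowerSeries R) = 0 := by
    rw [← coeff_zero_eq_constantCoeff, Polynomial.coeff_coe, coeff_trunc]
    simpa [coeff_zero_eq_constantCoeff] using hg
  rw [coeff_aeval_congr_poly htr
    (P := trunc (i + 1) f) (Q := trunc (n + 1) f) (fun d hd => by
      rw [coeff_trunc, coeff_trunc, if_pos (by omega), if_pos (by omega)])]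
  exact coeff_aeval_congr (fun d hd => by
    rw [Polynomial.coeff_coe, coeff_trunc, if_pos (by omega)]) _

lemma coeff_PSComp {f g : PowerSeries R} (hg : constantCoeff g = 0) (n : ℕ) :
    coeff n (PSComp f g) = ∑ j ∈ Finset.range (n + 1), coeff j f * coeff n (g ^ j) := by
  rw [coeff_PSComp_aeval hg le_rfl, Polynomial.aeval_def,
    Polynomial.eval₂_eq_sum_range' _ (natDegree_trunc_lt f n), map_sum]
  apply Finset.sum_congr rfl
  intro j hj
  rw [PowerSeries.algebraMap_apply, Algebra.algebraMap_self, RingHom.id_apply, coeff_C_mul,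
    coeff_trunc, if_pos (Finset.mem_range.mp hj)]

end PSCompAlgebra


section PSCompAlgebra2
variable {R : Type*} [CommRing R]

lemma PSComp_X_right (f : PowerSeries R) : PSComp f X = f := by
  ext n
  rw [coeff_PSComp (by simp) n]
  simp [coeff_X_pow, Finset.sum_ite_eq]

lemma constantCoeff_PSComp {f g : PowerSeries R} (hg : constantCoeff g = 0) :
    constantCoeff (PSComp f g) = constantCoeff f := by
  have := coeff_PSComp hg (f := f) 0
  simp only [coeff_zero_eq_constantCoeff] at *
  simpa using this

lemma PSComp_X_left {g : PowerSeries R} (hg : constantCoeff g = 0) : PSComp X g = g := by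
  ext n
  rw [coeff_PSComp hg n]
  rcases n with _ | n
  · simpa [coeff_X] using hg.symm
  · rw [Finset.sum_eq_single 1]
    · simp [coeff_X]
    · intro j hj hj1
      simp [coeff_X, hj1]
    · intro h
      exact absurd (Finset.mem_range.mpr (by omega)) h

lemma PSComp_mul {f₁ f₂ g : PowerSeries R} (hg : constantCoeff g = 0) :
    PSComp (f₁ * f₂) g = PSComp f₁ g * PSComp f₂ g := by
  ext n
  rw [coeff_PSComp_aeval hg (le_refl n),
    coeff_aeval_congr_poly hg (P := trunc (n + 1) (f₁ * f₂))
      (Q := trunc (n + 1) f₁ * trunc (n + 1) f₂) (fun i hi => by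
        rw [coeff_trunc, if_pos (by omega), PowerSeries.coeff_mul, Polynomial.coeff_mul]
        apply Finset.sum_congr rfl
        rintro ⟨a, b⟩ hmem
        have hab := Finset.HasAntidiagonal.mem_antidiagonal.mp hmem
        rw [coeff_trunc, coeff_trunc, if_pos (by omega), if_pos (by omega)]),
    map_mul, PowerSeries.coeff_mul, PowerSeries.coeff_mul]
  apply Finset.sum_congr rfl
  rintro ⟨a, b⟩ hmem
  have hab := Finset.HasAntidiagonal.mem_antidiagonal.mp hmem
  rw [coeff_PSComp_aeval hg (n := n) (by omega), coeff_PSComp_aeval hg (n := n) (by omega)]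

lemma PSComp_assoc {u f g : PowerSeries R} (hf : constantCoeff f = 0)
    (hg : constantCoeff g = 0) :
    PSComp u (PSComp f g) = PSComp (PSComp u f) g := by
  have hG : constantCoeff (PSComp f g) = 0 := (constantCoeff_PSComp hg).trans hf
  ext n
  rw [coeff_PSComp_aeval hG (le_refl n), coeff_PSComp_aeval hg (le_refl n),
    coeff_aeval_congr_poly hg (P := trunc (n + 1) (PSComp u f))
      (Q := (trunc (n + 1) u).comp (trunc (n + 1) f)) (fun i hi => by
        rw [coeff_trunc, if_pos (by omega), ← Polynomial.coeff_coe, coe_comp_eq_aeval,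
          coeff_PSComp_aeval hf (n := n) hi]
        exact (coeff_aeval_congr (fun d hd => by
          rw [Polynomial.coeff_coe, coeff_trunc, if_pos (by omega)]) _).symm),
    Polynomial.aeval_comp]
  exact coeff_aeval_congr (fun i hi =>
    (coeff_PSComp_aeval (f := f) hg (n := n) hi)) (trunc (n + 1) u)

section Iter
variable {u : PowerSeries R} (hu0 : constantCoeff u = 0)
include hu0

lemma constantCoeff_PSIter (k : ℕ) : constantCoeff (PSIter u k) = 0 := by
  induction k with
  | zero => simp [PSIter, constantCoeff_X]
  | succ k ih => exact (constantCoeff_PSComp ih).trans hu0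

lemma PSIter_add (a b : ℕ) :
    PSIter u (a + b) = PSComp (PSIter u a) (PSIter u b) := by
  induction a with
  | zero => simpa [PSIter] using (PSComp_X_left (constantCoeff_PSIter hu0 b)).symm
  | succ a ih =>
      have h1 : a + 1 + b = (a + b) + 1 := by omega
      rw [h1]
      show PSComp u (PSIter u (a + b)) = PSComp (PSComp u (PSIter u a)) (PSIter u b)
      rw [ih, PSComp_assoc (constantCoeff_PSIter hu0 a) (constantCoeff_PSIter hu0 b)]

lemma coeff_one_PSIter (k : ℕ) :
    coeff 1 (PSIter u k) = (coeff 1 u) ^ k := by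
  induction k with
  | zero => simp [PSIter, coeff_X]
  | succ k ih =>
      show coeff 1 (PSComp u (PSIter u k)) = _
      rw [coeff_PSComp (constantCoeff_PSIter hu0 k) 1, Finset.sum_range_succ,
        Finset.sum_range_one]
      simp only [pow_zero, pow_one, coeff_one, ih]
      rw [if_neg (by omega), mul_zero, zero_add, pow_succ]
      ring
end Iter

section Norm
variable {K : Type*} [NormedField K] (hKna : ∀ x y : K, ‖x + y‖ ≤ max ‖x‖ ‖y‖)
include hKna

lemma nonarch_sum {ι : Type*} {s : Finset ι} {f : ι → K} {C : ℝ} (hC : 0 ≤ C)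
    (h : ∀ i ∈ s, ‖f i‖ ≤ C) : ‖∑ i ∈ s, f i‖ ≤ C := by
  induction s using Finset.cons_induction with
  | empty => simpa using hC
  | cons a s ha ih =>
      rw [Finset.sum_cons]
      refine le_trans (hKna _ _) (max_le (h a (Finset.mem_cons_self a s)) (ih ?_))
      exact fun i hi => h i (Finset.mem_cons.mpr (Or.inr hi))

lemma norm_coeff_pow_le {g : PowerSeries K} (hg1 : ∀ n, ‖coeff n g‖ ≤ 1) (j n : ℕ) :
    ‖coeff n (g ^ j)‖ ≤ 1 := by
  induction j generalizing n with
  | zero =>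
      rcases n with _ | n <;> simp [coeff_one]
  | succ j ih =>
      rw [pow_succ, PowerSeries.coeff_mul]
      refine nonarch_sum hKna zero_le_one ?_
      rintro ⟨a, b⟩ _
      rw [norm_mul]
      exact mul_le_one₀ (ih a) (norm_nonneg _) (hg1 b)

lemma norm_coeff_PSIter_le {u : PowerSeries K} (hu0 : constantCoeff u = 0)
    (huint : ∀ n, ‖coeff n u‖ ≤ 1) (k n : ℕ) : ‖coeff n (PSIter u k)‖ ≤ 1 := by
  induction k generalizing n with
  | zero =>
      show ‖coeff n X‖ ≤ 1
      rw [coeff_X]; split <;> simp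
  | succ k ih =>
      show ‖coeff n (PSComp u (PSIter u k))‖ ≤ 1
      rw [coeff_PSComp (constantCoeff_PSIter hu0 k) n]
      refine nonarch_sum hKna zero_le_one ?_
      intro j _
      rw [norm_mul]
      exact mul_le_one₀ (huint j) (norm_nonneg _) (norm_coeff_pow_le hKna ih j n)
end Norm
end PSCompAlgebra2


lemma nonarch_sum' {K : Type*} [NormedField K] (hKna : ∀ x y : K, ‖x + y‖ ≤ max ‖x‖ ‖y‖)
    {ι : Type*} {s : Finset ι} {f : ι → K} {C : ℝ} (hC : 0 ≤ C)
    (h : ∀ i ∈ s, ‖f i‖ ≤ C) : ‖∑ i ∈ s, f i‖ ≤ C := by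
  induction s using Finset.cons_induction with
  | empty => simpa using hC
  | cons a s ha ih =>
      rw [Finset.sum_cons]
      refine le_trans (hKna _ _) (max_le (h a (Finset.mem_cons_self a s)) (ih ?_))
      exact fun i hi => h i (Finset.mem_cons.mpr (Or.inr hi))

section Padic
variable {p : ℕ} [Fact p.Prime]

lemma padic_inv_pow_le_norm_nat (i : ℕ) (hi : 1 ≤ i) :
    ((p : ℝ))⁻¹ ^ i ≤ ‖(i : ℚ_[p])‖ := by
  have hp1 : 1 < p := (Fact.out : p.Prime).one_lt
  have hnd : ¬ ((p : ℤ) ^ i ∣ (i : ℤ)) := by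
    intro hdvd
    have h1 : (p : ℤ) ^ i ≤ (i : ℤ) := Int.le_of_dvd (by exact_mod_cast hi) hdvd
    have h2 : (i : ℤ) < (p : ℤ) ^ i := by exact_mod_cast Nat.lt_pow_self (n := i) hp1
    omega
  have := (not_iff_not.mpr (Padic.norm_int_le_pow_iff_dvd (p := p) (i : ℤ) i)).mpr hnd
  push_cast at this
  have h3 : ((p:ℝ)) ^ (-(i:ℤ)) < ‖(i : ℚ_[p])‖ := lt_of_not_ge this
  refine le_trans (le_of_eq ?_) h3.le
  rw [zpow_neg, ← inv_zpow, zpow_natCast]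

lemma padic_norm_nat_le_one (i : ℕ) : ‖(i : ℚ_[p])‖ ≤ 1 := by
  have := Padic.norm_int_le_one (p := p) (i : ℤ)
  push_cast at this
  exact this

variable {a : ℚ_[p]} (ha : ‖a - 1‖ ≤ (p : ℝ)⁻¹)
include ha

lemma padic_norm_pow_sub_one_le (r : ℕ) : ‖a ^ r - 1‖ ≤ ‖(r : ℚ_[p])‖ := by
  rcases Nat.eq_zero_or_pos r with hr | hr
  · simp [hr]
  obtain ⟨r', rfl⟩ : ∃ r', r = r' + 1 := ⟨r - 1, by omega⟩
  have hxa : a = (a - 1) + 1 := by ring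
  set x := a - 1 with hx
  rw [hxa, add_pow]
  rw [Finset.sum_range_succ']
  simp only [pow_zero, one_mul, Nat.choose_zero_right, Nat.cast_one, mul_one, one_pow]
  rw [add_sub_cancel_right]
  -- now goal: ‖∑ i in range (r'+1), x ^ (i+1) * 1 ^ (r'+1-(i+1)) * C(r'+1, i+1)‖ ≤ ‖(r'+1 : ℚ_[p])‖
  have hCle : ∀ i : ℕ, ‖(x ^ (i + 1) * 1 ^ (r' + 1 - (i + 1)) * ((r' + 1).choose (i + 1) : ℚ_[p]))‖
      ≤ ‖((r' + 1 : ℕ) : ℚ_[p])‖ := by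
    intro i
    rw [one_pow, mul_one, norm_mul]
    have hid : ((i + 1 : ℕ) : ℚ_[p]) * ((r' + 1).choose (i + 1) : ℕ)
        = ((r' + 1 : ℕ) : ℚ_[p]) * (r'.choose i : ℕ) := by
      have h1 := Nat.add_one_mul_choose_eq r' i
      have h2 : (i + 1) * ((r' + 1).choose (i + 1)) = (r' + 1) * (r'.choose i) := by
        have : r'.succ * r'.choose i = r'.succ.choose i.succ * i.succ := Nat.add_one_mul_choose_eq r' i
        simpa [Nat.succ_eq_add_one, mul_comm] using this.symm
      exact_mod_cast congrArg (fun t : ℕ => ((t : ℚ_[p]))) h2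
    have hxp : ‖x ^ (i + 1)‖ ≤ ‖((i + 1 : ℕ) : ℚ_[p])‖ := by
      rw [norm_pow]
      calc ‖x‖ ^ (i + 1) ≤ ((p:ℝ))⁻¹ ^ (i + 1) := by
            apply pow_le_pow_left₀ (norm_nonneg _) ha
        _ ≤ ‖((i + 1 : ℕ) : ℚ_[p])‖ := padic_inv_pow_le_norm_nat _ (by omega)
    calc ‖x ^ (i+1)‖ * ‖(((r' + 1).choose (i + 1) : ℕ) : ℚ_[p])‖
        ≤ ‖((i + 1 : ℕ) : ℚ_[p])‖ * ‖(((r' + 1).choose (i + 1) : ℕ) : ℚ_[p])‖ :=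
          mul_le_mul_of_nonneg_right hxp (norm_nonneg _)
      _ = ‖((i + 1 : ℕ) : ℚ_[p]) * (((r' + 1).choose (i + 1) : ℕ) : ℚ_[p])‖ := (norm_mul _ _).symm
      _ = ‖((r' + 1 : ℕ) : ℚ_[p]) * ((r'.choose i : ℕ) : ℚ_[p])‖ := by rw [hid]
      _ = ‖((r' + 1 : ℕ) : ℚ_[p])‖ * ‖((r'.choose i : ℕ) : ℚ_[p])‖ := norm_mul _ _
      _ ≤ ‖((r' + 1 : ℕ) : ℚ_[p])‖ * 1 :=
          mul_le_mul_of_nonneg_left (padic_norm_nat_le_one _) (norm_nonneg _)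
      _ = ‖((r' + 1 : ℕ) : ℚ_[p])‖ := mul_one _
  refine nonarch_sum' (fun x y => Padic.nonarchimedean x y) (norm_nonneg _) ?_
  intro i _
  simpa [one_pow, mul_one] using hCle i

end Padic

section Padic2
variable {p : ℕ} [Fact p.Prime] {a : ℚ_[p]} (ha : ‖a - 1‖ ≤ (p : ℝ)⁻¹)
include ha

lemma padic_norm_a_eq_one : ‖a‖ = 1 := by
  have hp1 : 1 < p := (Fact.out : p.Prime).one_lt
  have hlt : ‖a - 1‖ < 1 := lt_of_le_of_lt ha (by
    rw [inv_lt_one_iff₀]; right; exact_mod_cast hp1)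
  by_contra hne
  have h1 : ‖a‖ ≤ 1 := by
    have h := Padic.nonarchimedean (a - 1) 1
    rw [sub_add_cancel, norm_one] at h
    exact h.trans (max_le hlt.le le_rfl)
  have h2 : ‖a‖ < 1 := lt_of_le_of_ne h1 hne
  have h3 : (1 : ℝ) ≤ max ‖a‖ ‖a - 1‖ := by
    have h := Padic.nonarchimedean a (-(a - 1))
    rw [show a + -(a - 1) = 1 by ring, norm_one, norm_neg] at h
    exact h
  rcases max_cases ‖a‖ ‖a - 1‖ with ⟨he, _⟩ | ⟨he, _⟩ <;> rw [he] at h3 <;> linarith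

lemma padic_norm_pow_diff (j k k' : ℕ) (hkk' : k' ≤ k) :
    ‖a ^ (j * k) - a ^ (j * k')‖ ≤ ‖(k : ℚ_[p]) - (k' : ℚ_[p])‖ := by
  have hsplit : j * k = j * k' + j * (k - k') := by
    cases Nat.le.dest hkk' with
    | intro d hd => subst hd; simp [Nat.add_sub_cancel_left, Nat.mul_add]
  rw [hsplit, pow_add]
  rw [show a ^ (j * k') * a ^ (j * (k - k')) - a ^ (j * k')
    = a ^ (j * k') * (a ^ (j * (k - k')) - 1) by ring]
  rw [norm_mul, norm_pow, padic_norm_a_eq_one ha, one_pow, one_mul]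
  calc ‖a ^ (j * (k - k')) - 1‖ ≤ ‖((j * (k - k') : ℕ) : ℚ_[p])‖ :=
        padic_norm_pow_sub_one_le ha _
    _ = ‖((j : ℕ) : ℚ_[p])‖ * ‖((k - k' : ℕ) : ℚ_[p])‖ := by
        push_cast; rw [norm_mul]
    _ ≤ 1 * ‖((k - k' : ℕ) : ℚ_[p])‖ :=
        mul_le_mul_of_nonneg_right (padic_norm_nat_le_one _) (norm_nonneg _)
    _ = ‖(k : ℚ_[p]) - (k' : ℚ_[p])‖ := by
        rw [one_mul, Nat.cast_sub hkk']

end Padic2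


noncomputable section

def Egen {K : Type*} [Field K] (lam : K) (j s : ℕ) : ℕ → K :=
  fun k => (k : K) ^ s * lam ^ (j * k)

def Emod (K : Type*) [Field K] (lam : K) : Submodule K (ℕ → K) :=
  Submodule.span K (Set.range fun js : ℕ × ℕ => Egen lam js.1 js.2)

variable {K : Type*} [Field K] {lam : K}

lemma Egen_mem (j s : ℕ) : Egen lam j s ∈ Emod K lam :=
  Submodule.subset_span ⟨(j, s), rfl⟩

lemma Emod_mul_mem {c₁ c₂ : ℕ → K} (h₁ : c₁ ∈ Emod K lam) (h₂ : c₂ ∈ Emod K lam) :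
    c₁ * c₂ ∈ Emod K lam := by
  induction h₁ using Submodule.span_induction with
  | zero => simpa using Submodule.zero_mem _
  | add x y _ _ hx hy => rw [add_mul]; exact Submodule.add_mem _ hx hy
  | smul r x _ hx => rw [smul_mul_assoc]; exact Submodule.smul_mem _ _ hx
  | mem x hx =>
      obtain ⟨⟨j, s⟩, rfl⟩ := hx
      induction h₂ using Submodule.span_induction with
      | zero => simpa using Submodule.zero_mem _
      | add x y _ _ hx hy => rw [mul_add]; exact Submodule.add_mem _ hx hy
      | smul r x _ hx => rw [mul_smul_comm]; exact Submodule.smul_mem _ _ hx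
      | mem y hy =>
          obtain ⟨⟨j', s'⟩, rfl⟩ := hy
          have : Egen lam j s * Egen lam j' s' = Egen lam (j + j') (s + s') := by
            funext k
            simp only [Egen, Pi.mul_apply]
            rw [pow_add, add_mul, pow_add]
            ring
          rw [this]
          exact Egen_mem _ _

lemma Emod_fun_sum_mem {ι : Type*} (s : Finset ι) (f : ι → ℕ → K)
    (h : ∀ i ∈ s, f i ∈ Emod K lam) : (fun k => ∑ i ∈ s, f i k) ∈ Emod K lam := by
  have : (fun k => ∑ i ∈ s, f i k) = ∑ i ∈ s, f i := by
    funext k; simp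
  rw [this]
  exact Submodule.sum_mem _ h

section Solve
variable [CharZero K] (hlam : lam ≠ 0)
include hlam

lemma Egen_solve : ∀ s j : ℕ, ∃ c ∈ Emod K lam,
    ∀ k : ℕ, c (k + 1) = lam * c k + Egen lam j s k := by
  intro s
  induction s using Nat.strong_induction_on with
  | _ s IH =>
      intro j
      have hMne : lam ^ j ≠ 0 := pow_ne_zero _ hlam
      have hs1 : ((s : K) + 1) ≠ 0 := by
        have : (((s + 1 : ℕ)) : K) ≠ 0 := Nat.cast_ne_zero.mpr (by omega)
        push_cast at this; exact this
      -- a candidate c₀ and remainder coefficients β with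
      -- c₀ (k+1) = lam * c₀ k + Egen j s k + ∑ t ∈ range s, β t * Egen j t k
      have key : ∃ c₀ ∈ Emod K lam, ∃ β : ℕ → K,
          ∀ k, c₀ (k + 1) = lam * c₀ k + Egen lam j s k
            + ∑ t ∈ Finset.range s, β t * Egen lam j t k := by
        by_cases hres : lam ^ j = lam
        · -- resonant case
          refine ⟨fun k => ((s : K) + 1)⁻¹ * (lam ^ j)⁻¹ * (k : K) ^ (s + 1) * lam ^ (j * k),
            ?_, fun t => ((s : K) + 1)⁻¹ * ((s + 1).choose t : K), ?_⟩
          · have : (fun k : ℕ => ((s : K) + 1)⁻¹ * (lam ^ j)⁻¹ * (k : K) ^ (s + 1) * lam ^ (j * k))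
                = (((s : K) + 1)⁻¹ * (lam ^ j)⁻¹) • Egen lam j (s + 1) := by
              funext k; simp [Egen]; ring
            rw [this]; exact Submodule.smul_mem _ _ (Egen_mem _ _)
          · intro k
            have hb : ((k : K) + 1) ^ (s + 1) = (k : K) ^ (s + 1) + ((s : K) + 1) * (k : K) ^ s
                + ∑ t ∈ Finset.range s, (k : K) ^ t * ((s + 1).choose t : K) := by
              rw [add_pow, Finset.sum_range_succ, Finset.sum_range_succ]
              simp only [one_pow, mul_one, Nat.choose_self, Nat.cast_one,
                Nat.choose_succ_self_right]
              push_cast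
              ring
            have hcast : ((k + 1 : ℕ) : K) = (k : K) + 1 := by push_cast; ring
            have hpow : lam ^ (j * (k + 1)) = lam ^ (j * k) * lam ^ j := by
              rw [Nat.mul_succ, pow_add]
            simp only [Egen]
            rw [hcast, hpow]
            rw [show ∑ t ∈ Finset.range s,
                  ((s : K) + 1)⁻¹ * ((s + 1).choose t : K) * ((k : K) ^ t * lam ^ (j * k))
                = ((s : K) + 1)⁻¹ * lam ^ (j * k)
                  * ∑ t ∈ Finset.range s, (k : K) ^ t * ((s + 1).choose t : K) by
              rw [Finset.mul_sum]
              refine Finset.sum_congr rfl fun t _ => ?_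
              ring]
            rw [hb, hres]
            field_simp
        · -- non-resonant case
          have hd : lam ^ j - lam ≠ 0 := sub_ne_zero.mpr hres
          refine ⟨fun k => (lam ^ j - lam)⁻¹ * (k : K) ^ s * lam ^ (j * k), ?_,
            fun t => (lam ^ j - lam)⁻¹ * lam ^ j * (s.choose t : K), ?_⟩
          · have : (fun k : ℕ => (lam ^ j - lam)⁻¹ * (k : K) ^ s * lam ^ (j * k))
                = ((lam ^ j - lam)⁻¹) • Egen lam j s := by
              funext k; simp [Egen]; ring
            rw [this]; exact Submodule.smul_mem _ _ (Egen_mem _ _)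
          · intro k
            have hb : ((k : K) + 1) ^ s = (k : K) ^ s
                + ∑ t ∈ Finset.range s, (k : K) ^ t * (s.choose t : K) := by
              rw [add_pow, Finset.sum_range_succ]
              simp only [one_pow, mul_one, Nat.choose_self, Nat.cast_one]
              ring
            have hcast : ((k + 1 : ℕ) : K) = (k : K) + 1 := by push_cast; ring
            have hpow : lam ^ (j * (k + 1)) = lam ^ (j * k) * lam ^ j := by
              rw [Nat.mul_succ, pow_add]
            simp only [Egen]
            rw [hcast, hpow]
            rw [show ∑ t ∈ Finset.range s,
                  (lam ^ j - lam)⁻¹ * lam ^ j * (s.choose t : K) * ((k : K) ^ t * lam ^ (j * k))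
                = (lam ^ j - lam)⁻¹ * lam ^ j * lam ^ (j * k)
                  * ∑ t ∈ Finset.range s, (k : K) ^ t * (s.choose t : K) by
              rw [Finset.mul_sum]
              refine Finset.sum_congr rfl fun t _ => ?_
              ring]
            rw [hb]
            field_simp
            ring
      obtain ⟨c₀, hc₀mem, β, hc₀⟩ := key
      -- solutions for the lower-order remainders
      have H : ∀ t : ℕ, ∃ ct, ct ∈ Emod K lam
          ∧ (t < s → ∀ k, ct (k + 1) = lam * ct k + Egen lam j t k) := by
        intro t
        by_cases ht : t < s
        · obtain ⟨ct, h1, h2⟩ := IH t ht j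
          exact ⟨ct, h1, fun _ => h2⟩
        · exact ⟨0, Submodule.zero_mem _, fun h => absurd h ht⟩
      choose cc hccmem hccrec using H
      refine ⟨fun k : ℕ => c₀ k - ∑ t ∈ Finset.range s, β t * cc t k, ?_, ?_⟩
      · have : (fun k : ℕ => c₀ k - ∑ t ∈ Finset.range s, β t * cc t k)
            = c₀ - ∑ t ∈ Finset.range s, β t • cc t := by
          funext k; simp
        rw [this]
        exact Submodule.sub_mem _ hc₀mem
          (Submodule.sum_mem _ fun t _ => Submodule.smul_mem _ _ (hccmem t))
      · intro k
        beta_reduce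
        have hsum : ∑ t ∈ Finset.range s, β t * cc t (k + 1)
            = lam * (∑ t ∈ Finset.range s, β t * cc t k)
              + ∑ t ∈ Finset.range s, β t * Egen lam j t k := by
          rw [Finset.mul_sum, ← Finset.sum_add_distrib]
          refine Finset.sum_congr rfl fun t ht => ?_
          rw [hccrec t (Finset.mem_range.mp ht) k]
          ring
        rw [hc₀ k, hsum]
        ring

lemma Emod_solve {e : ℕ → K} (he : e ∈ Emod K lam) : ∃ c ∈ Emod K lam,
    c 0 = 0 ∧ ∀ k : ℕ, c (k + 1) = lam * c k + e k := by
  -- first solve without the initial condition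
  have main : ∃ c ∈ Emod K lam, ∀ k : ℕ, c (k + 1) = lam * c k + e k := by
    induction he using Submodule.span_induction with
    | mem x hx =>
        obtain ⟨⟨j, s⟩, rfl⟩ := hx
        exact Egen_solve hlam s j
    | zero => exact ⟨0, Submodule.zero_mem _, by simp⟩
    | add x y _ _ hx hy =>
        obtain ⟨c₁, h1m, h1⟩ := hx
        obtain ⟨c₂, h2m, h2⟩ := hy
        exact ⟨c₁ + c₂, Submodule.add_mem _ h1m h2m, fun k => by
          simp [h1 k, h2 k]; ring⟩
    | smul r x _ hx =>
        obtain ⟨c₁, h1m, h1⟩ := hx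
        exact ⟨r • c₁, Submodule.smul_mem _ _ h1m, fun k => by
          simp [h1 k]; ring⟩
  obtain ⟨c, hcm, hc⟩ := main
  refine ⟨fun k : ℕ => c k - c 0 * Egen lam 1 0 k, ?_, ?_, ?_⟩
  · have : (fun k : ℕ => c k - c 0 * Egen lam 1 0 k) = c - (c 0) • Egen lam 1 0 := by
      funext k; simp
    rw [this]
    exact Submodule.sub_mem _ hcm (Submodule.smul_mem _ _ (Egen_mem _ _))
  · simp [Egen]
  · intro k
    beta_reduce
    have h1 : Egen lam 1 0 (k + 1) = lam * Egen lam 1 0 k := by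
      simp only [Egen, pow_zero, one_mul, Nat.one_mul]
      rw [pow_succ]
      ring
    rw [hc k, h1]
    ring

end Solve
end


section CoeffE
variable {K : Type*} [Field K] [CharZero K] {u : PowerSeries K}
  (hu0 : constantCoeff u = 0)
include hu0

lemma powE (n : ℕ)
    (IH : ∀ i, i < n → (fun k => coeff i (PSIter u k)) ∈ Emod K (coeff 1 u)) :
    ∀ j m : ℕ, m + 2 ≤ n + j →
      (fun k => coeff m ((PSIter u k) ^ j)) ∈ Emod K (coeff 1 u) := by
  intro j
  induction j with
  | zero =>
      intro m _
      have h : (fun k => coeff m ((PSIter u k) ^ 0))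
          = (coeff m (1 : PowerSeries K)) • Egen (coeff 1 u) 0 0 := by
        funext k; simp [Egen, pow_zero]
      rw [h]; exact Submodule.smul_mem _ _ (Egen_mem _ _)
  | succ j ihj =>
      intro m hm
      have hrw : (fun k => coeff m ((PSIter u k) ^ (j + 1)))
          = fun k => ∑ q ∈ Finset.HasAntidiagonal.antidiagonal m,
              coeff q.1 (PSIter u k) * coeff q.2 ((PSIter u k) ^ j) := by
        funext k
        rw [pow_succ', PowerSeries.coeff_mul]
      rw [hrw]
      apply Emod_fun_sum_mem
      rintro ⟨i, i'⟩ hq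
      have hii : i + i' = m := Finset.HasAntidiagonal.mem_antidiagonal.mp hq
      simp only
      by_cases hi0 : i = 0
      · have h : (fun k => coeff i (PSIter u k) * coeff i' ((PSIter u k) ^ j))
            = (0 : ℕ → K) := by
          funext k
          subst hi0
          rw [coeff_zero_eq_constantCoeff, constantCoeff_PSIter hu0, zero_mul]
          rfl
        rw [h]; exact Submodule.zero_mem _
      by_cases hij : i' < j
      · have h : (fun k => coeff i (PSIter u k) * coeff i' ((PSIter u k) ^ j))
            = (0 : ℕ → K) := by
          funext k
          rw [coeff_pow_eq_zero' (constantCoeff_PSIter hu0 k) hij, mul_zero]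
          rfl
        rw [h]; exact Submodule.zero_mem _
      · exact Emod_mul_mem (IH i (by omega)) (ihj i' (by omega))

lemma coeffE (hlam : coeff 1 u ≠ 0) :
    ∀ n : ℕ, (fun k => coeff n (PSIter u k)) ∈ Emod K (coeff 1 u) := by
  intro n
  induction n using Nat.strong_induction_on with
  | _ n IH =>
      match n with
      | 0 =>
          have h : (fun k => coeff 0 (PSIter u k)) = (0 : ℕ → K) := by
            funext k
            rw [coeff_zero_eq_constantCoeff, constantCoeff_PSIter hu0]
            rfl
          rw [h]; exact Submodule.zero_mem _
      | 1 =>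
          have h : (fun k => coeff 1 (PSIter u k)) = Egen (coeff 1 u) 1 0 := by
            funext k
            rw [coeff_one_PSIter hu0, Egen]
            simp
          rw [h]; exact Egen_mem _ _
      | (n + 2) =>
          set N := n + 2 with hN
          set e : ℕ → K := fun k => ∑ j ∈ Finset.Ico 2 (N + 1),
            coeff j u * coeff N ((PSIter u k) ^ j) with he
          have heE : e ∈ Emod K (coeff 1 u) := by
            apply Emod_fun_sum_mem
            intro j hj
            have hj2 : 2 ≤ j := (Finset.mem_Ico.mp hj).1
            have h : (fun k => coeff j u * coeff N ((PSIter u k) ^ j))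
                = (coeff j u) • (fun k => coeff N ((PSIter u k) ^ j)) := rfl
            rw [h]
            exact Submodule.smul_mem _ _
              (powE hu0 N (fun i hi => IH i (by omega)) j N (by omega))
          obtain ⟨c, hcm, hc0, hcrec⟩ := Emod_solve hlam heE
          have hagree : ∀ k, coeff N (PSIter u k) = c k := by
            intro k
            induction k with
            | zero =>
                show coeff N X = c 0
                rw [hc0, coeff_X, if_neg (by omega)]
            | succ k ihk =>
                show coeff N (PSComp u (PSIter u k)) = c (k + 1)
                rw [coeff_PSComp (constantCoeff_PSIter hu0 k) N, hcrec k, ← ihk]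
                rw [Finset.range_eq_Ico,
                  Finset.sum_eq_sum_Ico_succ_bot (by omega : 0 < N + 1),
                  Finset.sum_eq_sum_Ico_succ_bot (by omega : 1 < N + 1)]
                rw [coeff_zero_eq_constantCoeff, hu0, zero_mul, zero_add, pow_one]
          have h : (fun k => coeff N (PSIter u k)) = c := funext hagree
          rw [h]; exact hcm

end CoeffE


section Klip
variable {p : ℕ} [Fact p.Prime] {K : Type*} [NormedField K] [Algebra ℚ_[p] K]
  (hiso : ∀ x : ℚ_[p], ‖algebraMap ℚ_[p] K x‖ = ‖x‖)
  (hKna : ∀ x y : K, ‖x + y‖ ≤ max ‖x‖ ‖y‖)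
  {a : ℚ_[p]} (ha : ‖a - 1‖ ≤ (p : ℝ)⁻¹)

lemma padicInt_norm_sub (k k' : ℕ) :
    ‖((k : ℤ_[p]) - (k' : ℤ_[p]))‖ = ‖(k : ℚ_[p]) - (k' : ℚ_[p])‖ := by
  rw [PadicInt.norm_def, PadicInt.coe_sub, PadicInt.coe_natCast, PadicInt.coe_natCast]

lemma K_natCast_eq (k : ℕ) : (k : K) = algebraMap ℚ_[p] K (k : ℚ_[p]) := by
  rw [map_natCast]

include hiso

lemma K_norm_natCast_le_one (k : ℕ) : ‖(k : K)‖ ≤ 1 := by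
  rw [K_natCast_eq (p := p), hiso]
  exact padic_norm_nat_le_one k

include hKna

lemma K_pow_natCast_diff (s k k' : ℕ) :
    ‖(k : K) ^ s - (k' : K) ^ s‖ ≤ ‖((k : ℤ_[p]) - (k' : ℤ_[p]))‖ := by
  rw [padicInt_norm_sub, K_natCast_eq (p := p) k, K_natCast_eq (p := p) k',
    ← map_pow, ← map_pow, ← map_sub, hiso]
  rw [← geom_sum₂_mul (k : ℚ_[p]) (k' : ℚ_[p]) s, norm_mul]
  calc ‖∑ i ∈ Finset.range s, (k : ℚ_[p]) ^ i * (k' : ℚ_[p]) ^ (s - 1 - i)‖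
        * ‖(k : ℚ_[p]) - (k' : ℚ_[p])‖
      ≤ 1 * ‖(k : ℚ_[p]) - (k' : ℚ_[p])‖ := by
        apply mul_le_mul_of_nonneg_right _ (norm_nonneg _)
        apply nonarch_sum' (fun x y => Padic.nonarchimedean x y) zero_le_one
        intro i _
        rw [norm_mul, norm_pow, norm_pow]
        exact mul_le_one₀ (pow_le_one₀ (norm_nonneg _) (padic_norm_nat_le_one k))
          (pow_nonneg (norm_nonneg _) _)
          (pow_le_one₀ (norm_nonneg _) (padic_norm_nat_le_one k'))
    _ = ‖(k : ℚ_[p]) - (k' : ℚ_[p])‖ := one_mul _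

include ha

lemma K_lam_pow_diff (j k k' : ℕ) :
    ‖(algebraMap ℚ_[p] K a) ^ (j * k) - (algebraMap ℚ_[p] K a) ^ (j * k')‖
      ≤ ‖((k : ℤ_[p]) - (k' : ℤ_[p]))‖ := by
  rw [padicInt_norm_sub, ← map_pow, ← map_pow, ← map_sub, hiso]
  rcases le_total k' k with h | h
  · exact padic_norm_pow_diff ha j k k' h
  · rw [norm_sub_rev, norm_sub_rev (k : ℚ_[p])]
    exact padic_norm_pow_diff ha j k' k h

lemma Egen_lip (j s k k' : ℕ) :
    ‖Egen (algebraMap ℚ_[p] K a) j s k - Egen (algebraMap ℚ_[p] K a) j s k'‖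
      ≤ 2 * ‖((k : ℤ_[p]) - (k' : ℤ_[p]))‖ := by
  set lam := algebraMap ℚ_[p] K a with hlam
  have hlamnorm : ∀ t : ℕ, ‖lam ^ t‖ = 1 := by
    intro t
    rw [hlam, ← map_pow, hiso, norm_pow, padic_norm_a_eq_one ha, one_pow]
  have hdec : Egen lam j s k - Egen lam j s k'
      = ((k : K) ^ s - (k' : K) ^ s) * lam ^ (j * k)
        + (k' : K) ^ s * (lam ^ (j * k) - lam ^ (j * k')) := by
    simp only [Egen]; ring
  rw [hdec]
  calc ‖((k : K) ^ s - (k' : K) ^ s) * lam ^ (j * k)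
        + (k' : K) ^ s * (lam ^ (j * k) - lam ^ (j * k'))‖
      ≤ ‖((k : K) ^ s - (k' : K) ^ s) * lam ^ (j * k)‖
        + ‖(k' : K) ^ s * (lam ^ (j * k) - lam ^ (j * k'))‖ := norm_add_le _ _
    _ ≤ ‖(k : K) ^ s - (k' : K) ^ s‖ * 1
        + 1 * ‖lam ^ (j * k) - lam ^ (j * k')‖ := by
        rw [norm_mul, norm_mul]
        gcongr
        · rw [hlamnorm]
        · rw [norm_pow]
          exact pow_le_one₀ (norm_nonneg _) (K_norm_natCast_le_one hiso k')
    _ ≤ ‖((k : ℤ_[p]) - (k' : ℤ_[p]))‖ + ‖((k : ℤ_[p]) - (k' : ℤ_[p]))‖ := by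
        rw [mul_one, one_mul]
        exact add_le_add (K_pow_natCast_diff hiso hKna s k k') (K_lam_pow_diff hiso hKna ha j k k')
    _ = 2 * ‖((k : ℤ_[p]) - (k' : ℤ_[p]))‖ := by ring

lemma lip_of_mem_Emod {c : ℕ → K} (hc : c ∈ Emod K (algebraMap ℚ_[p] K a)) :
    ∃ C : ℝ, 0 ≤ C ∧ ∀ k k' : ℕ, ‖c k - c k'‖ ≤ C * ‖((k : ℤ_[p]) - (k' : ℤ_[p]))‖ := by
  induction hc using Submodule.span_induction with
  | mem x hx =>
      obtain ⟨⟨j, s⟩, rfl⟩ := hx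
      exact ⟨2, by norm_num, fun k k' => Egen_lip hiso hKna ha j s k k'⟩
  | zero => exact ⟨0, le_rfl, fun k k' => by simp⟩
  | add x y _ _ hx hy =>
      obtain ⟨C₁, hC₁, h₁⟩ := hx
      obtain ⟨C₂, hC₂, h₂⟩ := hy
      refine ⟨C₁ + C₂, by linarith, fun k k' => ?_⟩
      have : x k + y k - (x k' + y k') = (x k - x k') + (y k - y k') := by ring
      rw [Pi.add_apply, Pi.add_apply, this, add_mul]
      exact (norm_add_le _ _).trans (add_le_add (h₁ k k') (h₂ k k'))
  | smul r x _ hx =>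
      obtain ⟨C, hC, h⟩ := hx
      refine ⟨‖r‖ * C, mul_nonneg (norm_nonneg _) hC, fun k k' => ?_⟩
      rw [Pi.smul_apply, Pi.smul_apply, ← smul_sub, norm_smul, mul_assoc]
      exact mul_le_mul_of_nonneg_left (h k k') (norm_nonneg _)

end Klip


section Extend
variable {p : ℕ} [Fact p.Prime] {K : Type*} [NormedField K] [CompleteSpace K]

lemma appr_norm_le (m : ℤ_[p]) (i : ℕ) :
    ‖m - (PadicInt.appr m i : ℤ_[p])‖ ≤ (p : ℝ)⁻¹ ^ i := by
  have hmem := PadicInt.appr_spec i m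
  rw [Ideal.mem_span_singleton] at hmem
  obtain ⟨z, hz⟩ := hmem
  rw [hz]
  calc ‖(p : ℤ_[p]) ^ i * z‖ = ‖(p : ℤ_[p])‖ ^ i * ‖z‖ := by
        rw [norm_mul, norm_pow]
    _ ≤ ‖(p : ℤ_[p])‖ ^ i * 1 :=
        mul_le_mul_of_nonneg_left (PadicInt.norm_le_one z) (pow_nonneg (norm_nonneg _) _)
    _ = (p : ℝ)⁻¹ ^ i := by rw [mul_one, PadicInt.norm_p]

lemma pinv_lt_one (p : ℕ) [Fact p.Prime] : ((p : ℝ))⁻¹ < 1 := by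
  rw [inv_lt_one_iff₀]
  right
  exact_mod_cast (Fact.out : p.Prime).one_lt

lemma tendsto_pinv_pow (p : ℕ) [Fact p.Prime] :
    Tendsto (fun i : ℕ => ((p:ℝ))⁻¹ ^ i) atTop (nhds 0) :=
  tendsto_pow_atTop_nhds_zero_of_lt_one (by positivity) (pinv_lt_one p)

lemma tendsto_appr (m : ℤ_[p]) :
    Tendsto (fun i => ((PadicInt.appr m i : ℤ_[p]))) atTop (nhds m) := by
  rw [tendsto_iff_dist_tendsto_zero]
  apply squeeze_zero (fun i => dist_nonneg) (fun i => ?_) (tendsto_pinv_pow p)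
  rw [dist_eq_norm, norm_sub_rev]
  exact appr_norm_le m i

lemma extend_lip (c : ℕ → K) (C : ℝ) (hC : 0 ≤ C)
    (hlip : ∀ k k' : ℕ, ‖c k - c k'‖ ≤ C * ‖((k : ℤ_[p]) - (k' : ℤ_[p]))‖) :
    ∃ F : ℤ_[p] → K, Continuous F ∧
      ∀ (m : ℤ_[p]) (ks : ℕ → ℕ), Tendsto (fun i => ((ks i : ℤ_[p]))) atTop (nhds m) →
        Tendsto (fun i => c (ks i)) atTop (nhds (F m)) := by
  have hdistle : ∀ (k k' : ℕ), dist (c k) (c k') ≤ C * ‖((k : ℤ_[p]) - (k' : ℤ_[p]))‖ := by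
    intro k k'
    rw [dist_eq_norm]
    exact hlip k k'
  have hkey : ∀ m : ℤ_[p], ∃ L : K,
      Tendsto (fun i => c (PadicInt.appr m i)) atTop (nhds L) := by
    intro m
    apply cauchySeq_tendsto_of_complete
    apply cauchySeq_of_le_tendsto_0 (b := fun N => C * (2 * ((p:ℝ))⁻¹ ^ N))
    · intro n n' N hn hn'
      calc dist (c (PadicInt.appr m n)) (c (PadicInt.appr m n'))
          ≤ C * ‖((PadicInt.appr m n : ℤ_[p]) - (PadicInt.appr m n' : ℤ_[p]))‖ :=
            hdistle _ _
        _ ≤ C * (2 * ((p:ℝ))⁻¹ ^ N) := by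
            apply mul_le_mul_of_nonneg_left _ hC
            calc ‖((PadicInt.appr m n : ℤ_[p]) - (PadicInt.appr m n' : ℤ_[p]))‖
                = ‖((PadicInt.appr m n : ℤ_[p]) - m) + (m - (PadicInt.appr m n' : ℤ_[p]))‖ := by
                  ring_nf
              _ ≤ ‖((PadicInt.appr m n : ℤ_[p]) - m)‖ + ‖m - (PadicInt.appr m n' : ℤ_[p])‖ :=
                  norm_add_le _ _
              _ ≤ ((p:ℝ))⁻¹ ^ n + ((p:ℝ))⁻¹ ^ n' := by
                  rw [norm_sub_rev]
                  exact add_le_add (appr_norm_le m n) (appr_norm_le m n')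
              _ ≤ ((p:ℝ))⁻¹ ^ N + ((p:ℝ))⁻¹ ^ N :=
                  add_le_add (pow_le_pow_of_le_one (by positivity) (pinv_lt_one p).le hn)
                    (pow_le_pow_of_le_one (by positivity) (pinv_lt_one p).le hn')
              _ = 2 * ((p:ℝ))⁻¹ ^ N := by ring
    · have := ((tendsto_pinv_pow p).const_mul (2:ℝ)).const_mul C
      simpa using this
  choose F hF using hkey
  have hseq : ∀ (m : ℤ_[p]) (ks : ℕ → ℕ), Tendsto (fun i => ((ks i : ℤ_[p]))) atTop (nhds m) →
      Tendsto (fun i => c (ks i)) atTop (nhds (F m)) := by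
    intro m ks hks
    apply (hF m).congr_dist
    have hb : ∀ i, dist (c (PadicInt.appr m i)) (c (ks i))
        ≤ C * (‖((ks i : ℤ_[p])) - m‖ + ((p:ℝ))⁻¹ ^ i) := by
      intro i
      calc dist (c (PadicInt.appr m i)) (c (ks i))
          ≤ C * ‖((PadicInt.appr m i : ℤ_[p]) - (ks i : ℤ_[p]))‖ := hdistle _ _
        _ ≤ C * (‖((ks i : ℤ_[p])) - m‖ + ((p:ℝ))⁻¹ ^ i) := by
            apply mul_le_mul_of_nonneg_left _ hC
            calc ‖((PadicInt.appr m i : ℤ_[p]) - (ks i : ℤ_[p]))‖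
                = ‖(m - (PadicInt.appr m i : ℤ_[p])) + (((ks i : ℤ_[p])) - m)‖ := by
                  rw [norm_sub_rev]; ring_nf
              _ ≤ ‖m - (PadicInt.appr m i : ℤ_[p])‖ + ‖((ks i : ℤ_[p])) - m‖ := norm_add_le _ _
              _ ≤ ((p:ℝ))⁻¹ ^ i + ‖((ks i : ℤ_[p])) - m‖ :=
                  add_le_add (appr_norm_le m i) le_rfl
              _ = ‖((ks i : ℤ_[p])) - m‖ + ((p:ℝ))⁻¹ ^ i := by ring
    have htend : Tendsto (fun i => C * (‖((ks i : ℤ_[p])) - m‖ + ((p:ℝ))⁻¹ ^ i))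
        atTop (nhds 0) := by
      have := ((tendsto_iff_norm_sub_tendsto_zero.mp hks).add (tendsto_pinv_pow p)).const_mul C
      simpa using this
    exact squeeze_zero (fun i => dist_nonneg) hb htend
  refine ⟨F, ?_, hseq⟩
  have hFlip : ∀ m m' : ℤ_[p], dist (F m) (F m') ≤ C * dist m m' := by
    intro m m'
    have h1 : Tendsto (fun i => dist (c (PadicInt.appr m i)) (c (PadicInt.appr m' i)))
        atTop (nhds (dist (F m) (F m'))) := (hF m).dist (hF m')
    have h2 : Tendsto (fun i : ℕ => C * (((p:ℝ))⁻¹ ^ i + dist m m' + ((p:ℝ))⁻¹ ^ i))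
        atTop (nhds (C * (0 + dist m m' + 0))) := by
      apply Tendsto.const_mul
      exact (Tendsto.add ((tendsto_pinv_pow p).add tendsto_const_nhds) (tendsto_pinv_pow p))
    rw [show C * (0 + dist m m' + 0) = C * dist m m' by ring] at h2
    apply le_of_tendsto_of_tendsto' h1 h2
    intro i
    calc dist (c (PadicInt.appr m i)) (c (PadicInt.appr m' i))
        ≤ C * ‖((PadicInt.appr m i : ℤ_[p]) - (PadicInt.appr m' i : ℤ_[p]))‖ := hdistle _ _
      _ ≤ C * (((p:ℝ))⁻¹ ^ i + dist m m' + ((p:ℝ))⁻¹ ^ i) := by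
          apply mul_le_mul_of_nonneg_left _ hC
          calc ‖((PadicInt.appr m i : ℤ_[p]) - (PadicInt.appr m' i : ℤ_[p]))‖
              = ‖(((PadicInt.appr m i : ℤ_[p]) - m) + (m - m'))
                  + (m' - (PadicInt.appr m' i : ℤ_[p]))‖ := by ring_nf
            _ ≤ ‖((PadicInt.appr m i : ℤ_[p]) - m) + (m - m')‖
                + ‖m' - (PadicInt.appr m' i : ℤ_[p])‖ := norm_add_le _ _
            _ ≤ (‖(PadicInt.appr m i : ℤ_[p]) - m‖ + ‖m - m'‖)
                + ‖m' - (PadicInt.appr m' i : ℤ_[p])‖ :=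
                add_le_add (norm_add_le _ _) le_rfl
            _ ≤ (((p:ℝ))⁻¹ ^ i + dist m m') + ((p:ℝ))⁻¹ ^ i := by
                rw [norm_sub_rev (PadicInt.appr m i : ℤ_[p]) m]
                exact add_le_add (add_le_add (appr_norm_le m i) (by rw [dist_eq_norm]))
                  (appr_norm_le m' i)
            _ = ((p:ℝ))⁻¹ ^ i + dist m m' + ((p:ℝ))⁻¹ ^ i := by ring
  exact (LipschitzWith.of_dist_le' hFlip).continuous
end Extend


lemma tendsto_coeff_pow {K : Type*} [NormedField K] {ι : Type*} {l : Filter ι}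
    (g : ι → PowerSeries K) (G : PowerSeries K) :
    ∀ (j n : ℕ), (∀ i ≤ n, Tendsto (fun t => coeff i (g t)) l (nhds (coeff i G))) →
      Tendsto (fun t => coeff n ((g t) ^ j)) l (nhds (coeff n (G ^ j))) := by
  intro j
  induction j with
  | zero => intro n _; simpa using tendsto_const_nhds
  | succ j ihj =>
      intro n h
      have hrw : ∀ (H : PowerSeries K), coeff n (H ^ (j + 1))
          = ∑ q ∈ Finset.HasAntidiagonal.antidiagonal n, coeff q.1 H * coeff q.2 (H ^ j) := by
        intro H
        rw [pow_succ', PowerSeries.coeff_mul]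
      simp only [hrw]
      apply tendsto_finset_sum
      rintro ⟨i, i'⟩ hq
      have hii : i + i' = n := Finset.HasAntidiagonal.mem_antidiagonal.mp hq
      exact Tendsto.mul (h i (by omega)) (ihj i' (fun d hd => h d (by omega)))


/-- `ℤ_p`-iterates: if `u ∈ X·O_K[[X]]` is invertible with `u'(0) ∈ 1 + pℤ_p` (and
`u'(0) ≠ 1` for `p` odd, `u'(0) ∈ 1 + 4ℤ_2` for `p = 2`), then `m ↦ u^{∘m}` extends
uniquely from `ℕ` to a continuous map `ℤ_p → X·O_K[[X]]` (coefficientwise `p`-adic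
convergence) satisfying `u^{∘(m+m')} = u^{∘m} ∘ u^{∘m'}` and `(u^{∘m})'(0) = u'(0)^m`
(the latter expressed as the continuous extension of `k ↦ u'(0)^k`). -/
theorem exists_unique_Zp_iterates
    {p : ℕ} [Fact p.Prime] (K : Type*) [NormedField K]
    [Algebra ℚ_[p] K] [FiniteDimensional ℚ_[p] K]
    (hiso : ∀ x : ℚ_[p], ‖algebraMap ℚ_[p] K x‖ = ‖x‖)
    (hKna : ∀ x y : K, ‖x + y‖ ≤ max ‖x‖ ‖y‖)
    (u : PowerSeries K)
    (huint : ∀ n : ℕ, ‖PowerSeries.coeff n u‖ ≤ 1)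
    (hu0 : PowerSeries.constantCoeff u = 0)
    (huunit : ‖PowerSeries.coeff 1 u‖ = 1)
    -- u'(0) ∈ 1 + pℤ_p
    (hu1 : ∃ a : ℚ_[p], ‖a - 1‖ ≤ (p : ℝ)⁻¹ ∧ algebraMap ℚ_[p] K a = PowerSeries.coeff 1 u)
    -- u'(0) ≠ 1 for p odd; u'(0) ∈ 1 + 4ℤ_2 for p = 2
    (hodd : p ≠ 2 → PowerSeries.coeff 1 u ≠ 1)
    (heven : p = 2 → ∃ a : ℚ_[p], ‖a - 1‖ ≤ (4 : ℝ)⁻¹ ∧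
      algebraMap ℚ_[p] K a = PowerSeries.coeff 1 u) :
    ∃! U : ℤ_[p] → PowerSeries K,
      (∀ (m : ℤ_[p]) (n : ℕ), ‖PowerSeries.coeff n (U m)‖ ≤ 1) ∧
      (∀ m : ℤ_[p], PowerSeries.constantCoeff (U m) = 0) ∧
      (∀ n : ℕ, Continuous fun m : ℤ_[p] => PowerSeries.coeff n (U m)) ∧
      (∀ k : ℕ, U (k : ℤ_[p]) = PSIter u k) ∧
      (∀ m m' : ℤ_[p], U (m + m') = PSComp (U m) (U m')) ∧
      (∀ (m : ℤ_[p]) (ks : ℕ → ℕ),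
        Filter.Tendsto (fun i => ((ks i : ℤ_[p]))) Filter.atTop (nhds m) →
        Filter.Tendsto (fun i => (PowerSeries.coeff 1 u) ^ (ks i)) Filter.atTop
          (nhds (PowerSeries.coeff 1 (U m)))) := by
  classical
  have halgcont : Continuous (algebraMap ℚ_[p] K) :=
    (AddMonoidHomClass.isometry_of_norm _ hiso).continuous
  haveI : ContinuousSMul ℚ_[p] K := by
    refine ⟨?_⟩
    have h : (fun qx : ℚ_[p] × K => qx.1 • qx.2)
        = fun qx : ℚ_[p] × K => (algebraMap ℚ_[p] K qx.1) * qx.2 := by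
      funext qx
      rw [Algebra.smul_def]
    rw [h]
    exact ((halgcont.comp continuous_fst).mul continuous_snd)
  haveI : CompleteSpace K := FiniteDimensional.complete ℚ_[p] K
  haveI : CharZero K := charZero_of_injective_algebraMap (algebraMap ℚ_[p] K).injective
  obtain ⟨a, ha, haeq⟩ := hu1
  have hlam0 : coeff 1 u ≠ 0 := by
    intro h
    rw [h, norm_zero] at huunit
    norm_num at huunit
  have hcE : ∀ n, (fun k => coeff n (PSIter u k)) ∈ Emod K (algebraMap ℚ_[p] K a) := by
    intro n
    rw [haeq]
    exact coeffE hu0 hlam0 n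
  have hExt : ∀ n : ℕ, ∃ F : ℤ_[p] → K, Continuous F ∧
      ∀ (m : ℤ_[p]) (ks : ℕ → ℕ), Tendsto (fun i => ((ks i : ℤ_[p]))) atTop (nhds m) →
        Tendsto (fun i => coeff n (PSIter u (ks i))) atTop (nhds (F m)) := by
    intro n
    obtain ⟨C, hC0, hClip⟩ := lip_of_mem_Emod hiso hKna ha (hcE n)
    exact extend_lip _ C hC0 hClip
  choose F hFcont hFseq using hExt
  set U : ℤ_[p] → PowerSeries K := fun m => PowerSeries.mk fun n => F n m with hU
  have hcoeffU : ∀ (n : ℕ) (m : ℤ_[p]), coeff n (U m) = F n m := by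
    intro n m
    rw [hU, coeff_mk]
  -- bullet 4
  have hb4 : ∀ k : ℕ, U (k : ℤ_[p]) = PSIter u k := by
    intro k
    ext n
    rw [hcoeffU]
    have h1 := hFseq n (k : ℤ_[p]) (fun _ => k) tendsto_const_nhds
    exact tendsto_nhds_unique h1 tendsto_const_nhds
  -- bullet 1
  have hb1 : ∀ (m : ℤ_[p]) (n : ℕ), ‖coeff n (U m)‖ ≤ 1 := by
    intro m n
    rw [hcoeffU]
    have h1 := (hFseq n m (fun i => PadicInt.appr m i) (tendsto_appr m)).norm
    exact le_of_tendsto h1 (Filter.Eventually.of_forall fun i =>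
      norm_coeff_PSIter_le hKna hu0 huint _ n)
  -- bullet 2
  have hb2 : ∀ m : ℤ_[p], constantCoeff (U m) = 0 := by
    intro m
    rw [← coeff_zero_eq_constantCoeff, hcoeffU]
    have h1 := hFseq 0 m (fun i => PadicInt.appr m i) (tendsto_appr m)
    have h2 : (fun i => coeff 0 (PSIter u (PadicInt.appr m i))) = fun _ => (0 : K) := by
      funext i
      rw [coeff_zero_eq_constantCoeff, constantCoeff_PSIter hu0]
    rw [h2] at h1
    exact tendsto_nhds_unique h1 tendsto_const_nhds
  -- bullet 3
  have hb3 : ∀ n : ℕ, Continuous fun m : ℤ_[p] => coeff n (U m) := by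
    intro n
    have h : (fun m : ℤ_[p] => coeff n (U m)) = F n := funext fun m => hcoeffU n m
    rw [h]
    exact hFcont n
  -- bullet 5
  have hb5 : ∀ m m' : ℤ_[p], U (m + m') = PSComp (U m) (U m') := by
    intro m m'
    ext n
    have hks : Tendsto (fun i => (((PadicInt.appr m i + PadicInt.appr m' i : ℕ) : ℤ_[p])))
        atTop (nhds (m + m')) := by
      have h1 : (fun i => (((PadicInt.appr m i + PadicInt.appr m' i : ℕ) : ℤ_[p])))
          = fun i => ((PadicInt.appr m i : ℤ_[p]) + (PadicInt.appr m' i : ℤ_[p])) := by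
        funext i; push_cast; ring
      rw [h1]
      exact Tendsto.add (tendsto_appr m) (tendsto_appr m')
    have hL := hFseq n (m + m') _ hks
    have hfun : (fun i => coeff n (PSIter u (PadicInt.appr m i + PadicInt.appr m' i)))
        = fun i => ∑ j ∈ Finset.range (n + 1),
            coeff j (PSIter u (PadicInt.appr m i))
              * coeff n ((PSIter u (PadicInt.appr m' i)) ^ j) := by
      funext i
      rw [PSIter_add hu0, coeff_PSComp (constantCoeff_PSIter hu0 _)]
    rw [hfun] at hL
    have hR : Tendsto (fun i => ∑ j ∈ Finset.range (n + 1),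
        coeff j (PSIter u (PadicInt.appr m i))
          * coeff n ((PSIter u (PadicInt.appr m' i)) ^ j)) atTop
        (nhds (∑ j ∈ Finset.range (n + 1), coeff j (U m) * coeff n ((U m') ^ j))) := by
      apply tendsto_finset_sum
      intro j _
      apply Tendsto.mul
      · have h1 := hFseq j m (fun i => PadicInt.appr m i) (tendsto_appr m)
        rw [hcoeffU]
        exact h1
      · apply tendsto_coeff_pow
        intro i' _
        have h1 := hFseq i' m' (fun i => PadicInt.appr m' i) (tendsto_appr m')
        rw [hcoeffU]
        exact h1
    have heq := tendsto_nhds_unique hL hR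
    rw [hcoeffU, heq, coeff_PSComp (hb2 m')]
  -- bullet 6
  have hb6 : ∀ (m : ℤ_[p]) (ks : ℕ → ℕ),
      Tendsto (fun i => ((ks i : ℤ_[p]))) atTop (nhds m) →
      Tendsto (fun i => (coeff 1 u) ^ (ks i)) atTop (nhds (coeff 1 (U m))) := by
    intro m ks hks
    have h1 := hFseq 1 m ks hks
    have h2 : (fun i => coeff 1 (PSIter u (ks i))) = fun i => (coeff 1 u) ^ (ks i) := by
      funext i
      rw [coeff_one_PSIter hu0]
    rw [h2] at h1
    rw [hcoeffU]
    exact h1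
  refine ⟨U, ⟨hb1, hb2, hb3, hb4, hb5, hb6⟩, ?_⟩
  rintro V ⟨hV1, hV2, hV3, hV4, hV5, hV6⟩
  funext m
  ext n
  have hagree : (fun m : ℤ_[p] => coeff n (V m)) = fun m : ℤ_[p] => coeff n (U m) := by
    apply PadicInt.denseRange_natCast.equalizer (hV3 n) (hb3 n)
    funext k
    simp only [Function.comp_apply]
    rw [hV4 k, hb4 k]
  exact congrFun hagree m
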